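/- arXiv:1504.06765 — 3 statements merged into one kernel-verified Lean document; each statement's English description precedes it below -/
import Mathlib

section
/- Single-interval error representation. Let a < b be real numbers, let u, U, z : [a,b] → ℝ^N be continuously differentiable, let f : ℝ^N × [a,b] → ℝ^N be continuous, and let Ā : [a,b] → ℝ^{N×N} be a continuous matrix-valued function satisfying Ā(t)(U(t) − u(t)) = f(U(t), t) − f(u(t), t) for all t ∈ [a,b]. Assume u̇(t) = f(u(t), t) and −ż(t) = Ā(t)ᵀ z(t) on [a,b]. Then, with e = U − u and R(t) = U̇(t) − f(U(t), t), one has ⟨z(b), e(b)⟩ − ⟨z(a), e(a)⟩ = ∫ₐᵇ ⟨z(t), R(t)⟩ dt. -/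
open MeasureTheory Matrix
open scoped InnerProductSpace

/-- **Single-interval error representation.**
If `u̇ = f(u,t)`, `−ż = Ā(t)ᵀ z` and `Ā(t)(U(t) − u(t)) = f(U(t),t) − f(u(t),t)` on `[a,b]`,
with `u, U, z` continuously differentiable, then with `e = U − u` and
`R(t) = U̇(t) − f(U(t),t)` one has `⟨z(b), e(b)⟩ − ⟨z(a), e(a)⟩ = ∫ₐᵇ ⟨z(t), R(t)⟩ dt`. -/
theorem single_interval_error_representation (N : ℕ) (a b : ℝ) (hab : a < b)
    (u U z u' U' z' : ℝ → EuclideanSpace ℝ (Fin N))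
    (f : EuclideanSpace ℝ (Fin N) → ℝ → EuclideanSpace ℝ (Fin N))
    (A : ℝ → Matrix (Fin N) (Fin N) ℝ)
    (hf : Continuous fun q : EuclideanSpace ℝ (Fin N) × ℝ => f q.1 q.2)
    (hA : ContinuousOn A (Set.Icc a b))
    (hu : ∀ t ∈ Set.Icc a b, HasDerivWithinAt u (u' t) (Set.Icc a b) t)
    (hU : ∀ t ∈ Set.Icc a b, HasDerivWithinAt U (U' t) (Set.Icc a b) t)
    (hz : ∀ t ∈ Set.Icc a b, HasDerivWithinAt z (z' t) (Set.Icc a b) t)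
    (hu'c : ContinuousOn u' (Set.Icc a b))
    (hU'c : ContinuousOn U' (Set.Icc a b))
    (hz'c : ContinuousOn z' (Set.Icc a b))
    (hAavg : ∀ t ∈ Set.Icc a b, (A t).mulVec (U t - u t) = f (U t) t - f (u t) t)
    (hode : ∀ t ∈ Set.Icc a b, u' t = f (u t) t)
    (hdual : ∀ t ∈ Set.Icc a b, z' t = -(Matrix.mulVec (A t)ᵀ (z t))) :
    ⟪z b, U b - u b⟫_ℝ - ⟪z a, U a - u a⟫_ℝ
      = ∫ t in a..b, ⟪z t, U' t - f (U t) t⟫_ℝ := by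
  have hzc : ContinuousOn z (Set.Icc a b) := fun t ht => (hz t ht).continuousWithinAt
  have hUc : ContinuousOn U (Set.Icc a b) := fun t ht => (hU t ht).continuousWithinAt
  have huc : ContinuousOn u (Set.Icc a b) := fun t ht => (hu t ht).continuousWithinAt
  -- the derivative of t ↦ ⟪z t, U t - u t⟫ on [a,b]
  have key : ∀ t ∈ Set.Icc a b,
      HasDerivWithinAt (fun s => ⟪z s, U s - u s⟫_ℝ)
        (⟪z t, U' t - f (U t) t⟫_ℝ) (Set.Icc a b) t := by
    intro t ht
    have he : HasDerivWithinAt (fun s => U s - u s) (U' t - u' t) (Set.Icc a b) t :=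
      (hU t ht).sub (hu t ht)
    have h := (hz t ht).inner ℝ he
    have hadj : ⟪z' t, U t - u t⟫_ℝ = -⟪z t, f (U t) t - f (u t) t⟫_ℝ := by
      simp only [EuclideanSpace.inner_eq_star_dotProduct, star_trivial, WithLp.ofLp_sub,
        hdual t ht, ← hAavg t ht]
      rw [dotProduct_neg, Matrix.mulVec_transpose, dotProduct_comm, ← Matrix.dotProduct_mulVec]
      exact congrArg _ (dotProduct_comm _ _)
    have heq : ⟪z t, U' t - u' t⟫_ℝ + ⟪z' t, U t - u t⟫_ℝ
        = ⟪z t, U' t - f (U t) t⟫_ℝ := by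
      rw [hadj, hode t ht]
      rw [← inner_neg_right, ← inner_add_right]
      congr 1
      abel
    rw [← heq]
    exact h
  have hcont : ContinuousOn (fun s => ⟪z s, U s - u s⟫_ℝ) (Set.Icc a b) :=
    fun t ht => (key t ht).continuousWithinAt
  have hfc : ContinuousOn (fun t => f (U t) t) (Set.Icc a b) :=
    hf.comp_continuousOn (hUc.prodMk continuousOn_id)
  have hRc : ContinuousOn (fun t => ⟪z t, U' t - f (U t) t⟫_ℝ) (Set.Icc a b) :=
    hzc.inner (hU'c.sub hfc)
  have hint : IntervalIntegrable (fun t => ⟪z t, U' t - f (U t) t⟫_ℝ)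
      MeasureTheory.volume a b := by
    apply ContinuousOn.intervalIntegrable
    rwa [Set.uIcc_of_le hab.le]
  have hderiv : ∀ t ∈ Set.Ioo a b,
      HasDerivWithinAt (fun s => ⟪z s, U s - u s⟫_ℝ)
        (⟪z t, U' t - f (U t) t⟫_ℝ) (Set.Ioi t) t := by
    intro t ht
    have h1 : Set.Icc a b ∈ nhds t := by
      exact Icc_mem_nhds ht.1 ht.2
    exact ((key t (Set.Ioo_subset_Icc_self ht)).hasDerivAt h1).hasDerivWithinAt
  have := intervalIntegral.integral_eq_sub_of_hasDeriv_right_of_le hab.le hcont hderiv hint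
  rw [this]
end

section
/- Error representation (Theorem 1). Under the assumptions below, the error U(T) − u(T) satisfies ⟨z_T, U(T) − u(T)⟩ = ⟨z(0), U(0) − u(0)⟩ + Σ_{m=1}^{M} ⟨z(t_{m−1}), [U]_{m−1}⟩ + ∫₀ᵀ ⟨z(t), R(t)⟩ dt, where R(t) = U̇(t) − f(U(t), t) on each open subinterval and [U]_{m−1} = U(t_{m−1}⁺) − U(t_{m−1}) is the jump of U at t_{m−1}. -/
open MeasureTheory Matrix
open scoped InnerProductSpace


lemma inner_transpose_mulVec_aux {N : ℕ} (A : Matrix (Fin N) (Fin N) ℝ)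
    (x y a b : EuclideanSpace ℝ (Fin N)) (ha : a.ofLp = Aᵀ.mulVec x.ofLp)
    (hb : b.ofLp = A.mulVec y.ofLp) :
    inner (𝕜 := ℝ) (E := EuclideanSpace ℝ (Fin N)) a y
      = inner (𝕜 := ℝ) (E := EuclideanSpace ℝ (Fin N)) x b := by
  simp only [PiLp.inner_apply, ha, hb, Matrix.mulVec, dotProduct, Matrix.transpose_apply,
    RCLike.inner_apply, starRingEnd_apply, star_trivial, Finset.sum_mul, Finset.mul_sum]
  rw [Finset.sum_comm]
  exact Finset.sum_congr rfl fun i _ => Finset.sum_congr rfl fun j _ => by ring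


/-- **Error representation (Theorem 1).**
Let `u` solve `u̇ = f(u,t)` on `(0,T]`, let `0 = t₀ < ⋯ < t_M = T` be a partition, and let
`U` be piecewise smooth with respect to the partition: on each `(t_{m-1}, t_m]`, `U` agrees
with a function `Um m` that is continuously differentiable on `[t_{m-1}, t_m]` with
derivative `Um' m` (so the right limit is `U(t_{m-1}⁺) = Um m (t_{m-1})` and the residual is
`R = Um' m - f(U,·)` on the subinterval).  Let `Ā` be continuous with
`Ā(t)(U(t) − u(t)) = f(U(t),t) − f(u(t),t)`, and let `z` solve the dual problem
`−ż = Āᵀ z` on `[0,T)` with `z(T) = z_T`.  Then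
`⟨z_T, U(T) − u(T)⟩ = ⟨z(0), U(0) − u(0)⟩ + Σ_m ⟨z(t_{m−1}), [U]_{m−1}⟩ + ∫₀ᵀ ⟨z, R⟩ dt`. -/
theorem error_representation (N M : ℕ) (hM : 0 < M) (T : ℝ) (hT : 0 < T)
    (t : ℕ → ℝ) (ht0 : t 0 = 0) (htM : t M = T) (htlt : ∀ m < M, t m < t (m + 1))
    (u U z u' z' : ℝ → EuclideanSpace ℝ (Fin N))
    (Um Um' : ℕ → ℝ → EuclideanSpace ℝ (Fin N))
    (f : EuclideanSpace ℝ (Fin N) → ℝ → EuclideanSpace ℝ (Fin N))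
    (A : ℝ → Matrix (Fin N) (Fin N) ℝ)
    (zT : EuclideanSpace ℝ (Fin N))
    -- f is continuous
    (hf : Continuous fun q : EuclideanSpace ℝ (Fin N) × ℝ => f q.1 q.2)
    -- Ā is continuous and satisfies the averaged-Jacobian property
    (hA : ContinuousOn A (Set.Icc 0 T))
    (hAavg : ∀ s ∈ Set.Icc 0 T, (A s).mulVec (U s - u s) = f (U s) s - f (u s) s)
    -- u is a continuously differentiable solution of the ODE
    (hu : ∀ s ∈ Set.Icc 0 T, HasDerivWithinAt u (u' s) (Set.Icc 0 T) s)
    (hu'c : ContinuousOn u' (Set.Icc 0 T))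
    (hode : ∀ s ∈ Set.Ioc 0 T, u' s = f (u s) s)
    -- U is piecewise smooth: on `(t m, t (m+1)]` it agrees with the C¹ function `Um m`
    (hUpw : ∀ m < M, ∀ s ∈ Set.Ioc (t m) (t (m + 1)), Um m s = U s)
    (hUm : ∀ m < M, ∀ s ∈ Set.Icc (t m) (t (m + 1)),
      HasDerivWithinAt (Um m) (Um' m s) (Set.Icc (t m) (t (m + 1))) s)
    (hUm'c : ∀ m < M, ContinuousOn (Um' m) (Set.Icc (t m) (t (m + 1))))
    -- z is a continuously differentiable solution of the dual problem
    (hz : ∀ s ∈ Set.Icc 0 T, HasDerivWithinAt z (z' s) (Set.Icc 0 T) s)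
    (hz'c : ContinuousOn z' (Set.Icc 0 T))
    (hdual : ∀ s ∈ Set.Ico 0 T, z' s = -(Matrix.mulVec (A s)ᵀ (z s)))
    (hzT : z T = zT) :
    ⟪zT, U T - u T⟫_ℝ
      = ⟪z 0, U 0 - u 0⟫_ℝ
        + ∑ m ∈ Finset.range M, ⟪z (t m), Um m (t m) - U (t m)⟫_ℝ
        + ∑ m ∈ Finset.range M, ∫ s in t m..t (m + 1), ⟪z s, Um' m s - f (U s) s⟫_ℝ := by
  -- monotonicity of the partition
  have hle : ∀ a b : ℕ, a ≤ b → b ≤ M → t a ≤ t b := by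
    intro a b hab hbM
    induction b, hab using Nat.le_induction with
    | base => exact le_rfl
    | succ n hn ih =>
      exact le_trans (ih (by omega)) (le_of_lt (htlt n (by omega)))
  have hbound : ∀ m ≤ M, t m ∈ Set.Icc (0:ℝ) T := by
    intro m hm
    exact ⟨ht0 ▸ hle 0 m (Nat.zero_le m) hm, htM ▸ hle m M hm le_rfl⟩
  -- continuity of the basic functions
  have hzc : ContinuousOn z (Set.Icc 0 T) := fun x hx => (hz x hx).continuousWithinAt
  have huc : ContinuousOn u (Set.Icc 0 T) := fun x hx => (hu x hx).continuousWithinAt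
  -- key per-interval identity
  have key : ∀ m < M,
      (∫ s in t m..t (m + 1), ⟪z s, Um' m s - f (U s) s⟫_ℝ)
        = ⟪z (t (m + 1)), U (t (m + 1)) - u (t (m + 1))⟫_ℝ
          - ⟪z (t m), Um m (t m) - u (t m)⟫_ℝ := by
    intro m hm
    have hab : t m < t (m + 1) := htlt m hm
    have hsub : Set.Icc (t m) (t (m + 1)) ⊆ Set.Icc 0 T := by
      intro x hx
      exact ⟨le_trans (hbound m (le_of_lt hm)).1 hx.1,
        le_trans hx.2 (hbound (m + 1) hm).2⟩
    set g : ℝ → ℝ := fun s => ⟪z s, Um m s - u s⟫_ℝ with hg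
    set g' : ℝ → ℝ := fun s => ⟪z' s, Um m s - u s⟫_ℝ + ⟪z s, Um' m s - u' s⟫_ℝ with hg'
    have hUmc : ContinuousOn (Um m) (Set.Icc (t m) (t (m + 1))) :=
      fun x hx => (hUm m hm x hx).continuousWithinAt
    have hgc : ContinuousOn g (Set.Icc (t m) (t (m + 1))) :=
      ((hzc.mono hsub).inner (hUmc.sub (huc.mono hsub)))
    have hg'c : ContinuousOn g' (Set.Icc (t m) (t (m + 1))) :=
      (((hz'c.mono hsub).inner (hUmc.sub (huc.mono hsub)))).add
        ((hzc.mono hsub).inner ((hUm'c m hm).sub (hu'c.mono hsub)))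
    have hg'int : IntervalIntegrable g' volume (t m) (t (m + 1)) :=
      (hg'c.mono (by rw [Set.uIcc_of_le hab.le])).intervalIntegrable
    have hderiv : ∀ x ∈ Set.Ioo (t m) (t (m + 1)), HasDerivAt g (g' x) x := by
      intro x hx
      have hx0T : x ∈ Set.Ioo (0:ℝ) T :=
        ⟨lt_of_le_of_lt (hbound m (le_of_lt hm)).1 hx.1,
          lt_of_lt_of_le hx.2 (hbound (m + 1) hm).2⟩
      have hzx : HasDerivAt z (z' x) x :=
        (hz x (Set.mem_Icc.mpr ⟨hx0T.1.le, hx0T.2.le⟩)).hasDerivAt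
          (Icc_mem_nhds hx0T.1 hx0T.2)
      have hux : HasDerivAt u (u' x) x :=
        (hu x (Set.mem_Icc.mpr ⟨hx0T.1.le, hx0T.2.le⟩)).hasDerivAt
          (Icc_mem_nhds hx0T.1 hx0T.2)
      have hUmx : HasDerivAt (Um m) (Um' m x) x :=
        (hUm m hm x (Set.mem_Icc.mpr ⟨hx.1.le, hx.2.le⟩)).hasDerivAt
          (Icc_mem_nhds hx.1 hx.2)
      have := HasDerivAt.inner ℝ hzx (hUmx.sub hux)
      simpa [hg, hg', add_comm] using this
    have hftc : (∫ s in t m..t (m + 1), g' s) = g (t (m + 1)) - g (t m) :=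
      intervalIntegral.integral_eq_sub_of_hasDerivAt_of_le hab.le hgc hderiv hg'int
    have hcongr : (∫ s in t m..t (m + 1), ⟪z s, Um' m s - f (U s) s⟫_ℝ)
        = ∫ s in t m..t (m + 1), g' s := by
      apply intervalIntegral.integral_congr_ae
      have hne : ∀ᵐ x : ℝ ∂volume, x ≠ t (m + 1) := by
        simpa using measure_eq_zero_iff_ae_notMem.mp (measure_singleton (t (m + 1)))
      filter_upwards [hne] with x hxne hxmem
      rw [Set.uIoc_of_le hab.le] at hxmem
      have hxo : x ∈ Set.Ioo (t m) (t (m + 1)) := ⟨hxmem.1, lt_of_le_of_ne hxmem.2 hxne⟩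
      have hx0T : x ∈ Set.Icc (0:ℝ) T := hsub ⟨hxo.1.le, hxo.2.le⟩
      have hxT : x < T := lt_of_lt_of_le hxo.2 (hbound (m + 1) hm).2
      have hUeq : Um m x = U x := hUpw m hm x ⟨hxo.1, hxo.2.le⟩
      have hz'x : z' x = -(Matrix.mulVec (A x)ᵀ (z x)) := hdual x ⟨hx0T.1, hxT⟩
      have hu'x : u' x = f (u x) x :=
        hode x ⟨lt_of_le_of_lt (hbound m hm.le).1 hxo.1, hx0T.2⟩
      have h1 : ⟪z' x, Um m x - u x⟫_ℝ = -⟪z x, f (U x) x - f (u x) x⟫_ℝ := by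
        have ha : (-(z' x)).ofLp = (A x)ᵀ.mulVec (z x).ofLp := by
          rw [WithLp.ofLp_neg, hz'x, neg_neg]
        have hb : (f (U x) x - f (u x) x).ofLp = (A x).mulVec (U x - u x).ofLp := by
          rw [WithLp.ofLp_sub, WithLp.ofLp_sub, hAavg x hx0T]
        rw [hUeq, ← neg_neg (z' x), inner_neg_left, inner_transpose_mulVec_aux (A x) (z x) _ _ _ ha hb]
      simp only [hg']
      rw [h1, hu'x]
      simp only [inner_sub_right, inner_neg_left]
      ring
    rw [hcongr, hftc]
    have hUb : Um m (t (m + 1)) = U (t (m + 1)) :=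
      hUpw m hm (t (m + 1)) ⟨hab, le_rfl⟩
    simp only [hg, hUb]
  -- telescoping
  have hjump : ∀ m ∈ Finset.range M,
      ⟪z (t m), Um m (t m) - U (t m)⟫_ℝ
        + ∫ s in t m..t (m + 1), ⟪z s, Um' m s - f (U s) s⟫_ℝ
      = ⟪z (t (m + 1)), U (t (m + 1)) - u (t (m + 1))⟫_ℝ
        - ⟪z (t m), U (t m) - u (t m)⟫_ℝ := by
    intro m hm
    rw [key m (Finset.mem_range.mp hm)]
    simp only [inner_sub_right]
    ring
  rw [add_assoc, ← Finset.sum_add_distrib, Finset.sum_congr rfl hjump,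
    Finset.sum_range_sub (fun m => ⟪z (t m), U (t m) - u (t m)⟫_ℝ)]
  rw [ht0, htM, hzT]
  ring
end

section
/- Error estimate (Theorem 2). Under the assumptions below, the error decomposes as ⟨z_T, U(T) − u(T)⟩ = E_D + E_G + E_C, where E_D = ⟨z(0), U(0) − u(0)⟩, E_G = Σ_{m=1}^{M} [⟨z(t_{m−1}) − (πz)(t_{m−1}⁺), [U]_{m−1}⟩ + ∫_{t_{m−1}}^{t_m} ⟨z(t) − (πz)(t), R(t)⟩ dt], and E_C = Σ_{m=1}^{M} [⟨(πz)(t_{m−1}⁺), [U]_{m−1}⟩ + ∫_{t_{m−1}}^{t_m} ⟨(πz)(t), R(t)⟩ dt]. Moreover there exist constants C_p and C_p′, depending only on p and the nodes τ₀,…,τ_p, such that |E_D| ≤ ‖z(0)‖·‖U(0) − u(0)‖, |E_G| ≤ C_p · max_{1≤m≤M} { Δt_m^{p+1} ( ‖[U]_{m−1}‖/Δt_m + sup_{(t_{m−1},t_m)} ‖R‖ ) } · ∫₀ᵀ ‖z^{(p+1)}(t)‖ dt, and |E_C| ≤ C_p′ · max_{0≤k≤p, 1≤m≤M} ‖Δt_m^{−1}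 R̄_k^m‖ · ∫₀ᵀ ‖(πz)(t)‖ dt. -/
open MeasureTheory Matrix
open scoped InnerProductSpace
open scoped Nat

/-- The Lagrange nodal basis `{λ_k}` of polynomials of degree `≤ p` on `[0,1]`
associated with nodes `τ₀ < ⋯ < τ_p`, i.e. `λ_i(τ_j) = δ_{ij}`. -/
noncomputable def lagB (p : ℕ) (τ : Fin (p + 1) → ℝ) (k : Fin (p + 1)) (x : ℝ) : ℝ :=
  ∏ j ∈ Finset.univ.erase k, (x - τ j) / (τ k - τ j)

/-- The degree-`p` Lagrange interpolant of `z` on the interval `[a, b]` at the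
nodal points `a + τ_k (b − a)`: `(πz)(s) = Σ_k λ_k((s−a)/(b−a)) • z(a + τ_k (b−a))`. -/
noncomputable def interpOn {N : ℕ} (p : ℕ) (τ : Fin (p + 1) → ℝ)
    (z : ℝ → EuclideanSpace ℝ (Fin N)) (a b s : ℝ) : EuclideanSpace ℝ (Fin N) :=
  ∑ k, lagB p τ k ((s - a) / (b - a)) • z (a + τ k * (b - a))

section A
variable {p : ℕ} {τ : Fin (p + 1) → ℝ}

lemma lagB_eq_eval (k : Fin (p + 1)) (x : ℝ) :
    lagB p τ k x = (Lagrange.basis Finset.univ τ k).eval x := by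
  unfold lagB Lagrange.basis Lagrange.basisDivisor
  rw [Polynomial.eval_prod]
  refine Finset.prod_congr rfl fun j _ => ?_
  simp [div_eq_inv_mul, mul_comm]

lemma lagB_continuous (k : Fin (p + 1)) : Continuous (lagB p τ k) := by
  simp only [funext fun x => lagB_eq_eval (τ := τ) k x]
  exact Polynomial.continuous _

lemma moment_identity (hτ : StrictMono τ) {j : ℕ} (hj : j ≤ p) (x : ℝ) :
    ∑ k, lagB p τ k x * τ k ^ j = x ^ j := by
  have hinj : Set.InjOn τ (Finset.univ : Finset (Fin (p + 1))) := fun a _ b _ h => hτ.injective h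
  have hdeg : ((Polynomial.X : Polynomial ℝ) ^ j).degree < (Finset.univ : Finset (Fin (p + 1))).card := by
    rw [Polynomial.degree_X_pow]
    simp only [Finset.card_univ, Fintype.card_fin]
    exact_mod_cast Nat.lt_succ_of_le hj
  have h := Lagrange.eq_interpolate (f := ((Polynomial.X : Polynomial ℝ) ^ j)) hinj hdeg
  have := congrArg (Polynomial.eval x) h
  rw [Lagrange.interpolate_apply, Polynomial.eval_pow, Polynomial.eval_X,
    Polynomial.eval_finset_sum] at this
  rw [this]
  refine Finset.sum_congr rfl fun k _ => ?_
  simp [lagB_eq_eval, mul_comm]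
end A

section A2
variable {p : ℕ} {τ : Fin (p + 1) → ℝ} {N : ℕ}

lemma interpOn_poly (hτ : StrictMono τ) {a b : ℝ} (hab : b - a ≠ 0)
    (c : ℕ → EuclideanSpace ℝ (Fin N)) (s : ℝ) :
    interpOn p τ (fun y => ∑ j ∈ Finset.range (p + 1), (y - a) ^ j • c j) a b s
      = ∑ j ∈ Finset.range (p + 1), (s - a) ^ j • c j := by
  unfold interpOn
  have key : ∀ j, j ∈ Finset.range (p+1) →
      (∑ k, lagB p τ k ((s-a)/(b-a)) * (τ k * (b-a)) ^ j) = (s-a)^j := by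
    intro j hj
    have hm := moment_identity hτ (Nat.lt_succ_iff.mp (Finset.mem_range.mp hj)) ((s-a)/(b-a))
    calc ∑ k, lagB p τ k ((s-a)/(b-a)) * (τ k * (b-a)) ^ j
        = (∑ k, lagB p τ k ((s-a)/(b-a)) * τ k ^ j) * (b-a)^j := by
          rw [Finset.sum_mul]; exact Finset.sum_congr rfl fun k _ => by rw [mul_pow, mul_assoc]
      _ = ((s-a)/(b-a))^j * (b-a)^j := by rw [hm]
      _ = (s-a)^j := by rw [div_pow, div_mul_cancel₀]; exact pow_ne_zero _ hab
  calc (∑ k, lagB p τ k ((s - a) / (b - a)) •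
        ∑ j ∈ Finset.range (p + 1), (a + τ k * (b - a) - a) ^ j • c j)
      = ∑ j ∈ Finset.range (p+1), (∑ k, lagB p τ k ((s-a)/(b-a)) * (τ k * (b-a))^j) • c j := by
        simp_rw [Finset.smul_sum, smul_smul, add_sub_cancel_left]
        rw [Finset.sum_comm]
        simp_rw [← Finset.sum_smul]
    _ = ∑ j ∈ Finset.range (p + 1), (s - a) ^ j • c j :=
        Finset.sum_congr rfl fun j hj => by rw [key j hj]

lemma interpOn_sub (z g : ℝ → EuclideanSpace ℝ (Fin N)) (a b s : ℝ) :
    interpOn p τ (fun y => z y - g y) a b s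
      = interpOn p τ z a b s - interpOn p τ g a b s := by
  unfold interpOn
  rw [← Finset.sum_sub_distrib]
  exact Finset.sum_congr rfl fun k _ => smul_sub _ _ _

lemma taylor_eq_sum (z : ℝ → EuclideanSpace ℝ (Fin N)) (S : Set ℝ) (a y : ℝ) :
    taylorWithinEval z p S a y
      = ∑ j ∈ Finset.range (p + 1),
          (y - a) ^ j • ((j ! : ℝ)⁻¹ • iteratedDerivWithin j z S a) := by
  rw [taylor_within_apply]
  exact Finset.sum_congr rfl fun j _ => by rw [smul_smul, mul_comm]

lemma interpOn_taylor (hτ : StrictMono τ) {a b : ℝ} (hab : b - a ≠ 0)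
    (z : ℝ → EuclideanSpace ℝ (Fin N)) (S : Set ℝ) (s : ℝ) :
    interpOn p τ (fun y => taylorWithinEval z p S a y) a b s
      = taylorWithinEval z p S a s := by
  simp_rw [taylor_eq_sum (p := p) z S a]
  exact interpOn_poly hτ hab _ s

lemma tau_mem (hτ : StrictMono τ) (hτ0 : 0 ≤ τ 0) (hτ1 : τ (Fin.last p) ≤ 1)
    (k : Fin (p + 1)) : τ k ∈ Set.Icc (0:ℝ) 1 :=
  ⟨hτ0.trans (hτ.monotone (Fin.zero_le k)), (hτ.monotone (Fin.le_last k)).trans hτ1⟩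

noncomputable def lagBound (p : ℕ) (τ : Fin (p + 1) → ℝ) : ℝ :=
  ∑ k, sSup ((fun x => |lagB p τ k x|) '' Set.Icc (0:ℝ) 1)

lemma abs_lagB_le (k : Fin (p + 1)) {x : ℝ} (hx : x ∈ Set.Icc (0:ℝ) 1) :
    |lagB p τ k x| ≤ sSup ((fun x => |lagB p τ k x|) '' Set.Icc (0:ℝ) 1) :=
  le_csSup (IsCompact.bddAbove_image isCompact_Icc
    ((lagB_continuous (τ := τ) k).abs.continuousOn)) (Set.mem_image_of_mem _ hx)

lemma lagB_sSup_nonneg (k : Fin (p + 1)) :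
    0 ≤ sSup ((fun x => |lagB p τ k x|) '' Set.Icc (0:ℝ) 1) :=
  le_trans (abs_nonneg _) (abs_lagB_le k (by norm_num : (0:ℝ) ∈ Set.Icc (0:ℝ) 1))

lemma lagBound_nonneg : 0 ≤ lagBound p τ :=
  Finset.sum_nonneg fun k _ => lagB_sSup_nonneg k
end A2

section B
variable {p N : ℕ} {τ : Fin (p + 1) → ℝ}

lemma taylor_remainder {T : ℝ} (hT : 0 < T) {z : ℝ → EuclideanSpace ℝ (Fin N)}
    (hz : ContDiffOn ℝ (p + 2 : ℕ) z (Set.Icc 0 T)) {a x : ℝ}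
    (ha : 0 ≤ a) (hax : a ≤ x) (hxT : x ≤ T) :
    z x - taylorWithinEval z p (Set.Icc 0 T) a x
      = ∫ σ in a..x, ((p ! : ℝ)⁻¹ * (x - σ) ^ p) •
          iteratedDerivWithin (p + 1) z (Set.Icc 0 T) σ := by
  have hzp : ContDiffOn ℝ p z (Set.Icc 0 T) := hz.of_le (by exact_mod_cast Nat.le_add_right p 2)
  have hsub : Set.Icc a x ⊆ Set.Icc 0 T := Set.Icc_subset_Icc ha hxT
  have hDcont : ContinuousOn (iteratedDerivWithin (p + 1) z (Set.Icc 0 T)) (Set.Icc 0 T) :=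
    hz.continuousOn_iteratedDerivWithin (by exact_mod_cast Nat.add_le_add_left one_le_two p)
      (uniqueDiffOn_Icc hT)
  have hint : IntervalIntegrable
      (fun σ => ((p ! : ℝ)⁻¹ * (x - σ) ^ p) •
        iteratedDerivWithin (p + 1) z (Set.Icc 0 T) σ) volume a x := by
    apply ContinuousOn.intervalIntegrable_of_Icc hax
    exact (Continuous.continuousOn (by fun_prop : Continuous fun σ : ℝ => (p ! : ℝ)⁻¹ * (x - σ) ^ p)).smul (hDcont.mono hsub)
  have hcont : ContinuousOn (fun y => taylorWithinEval z p (Set.Icc 0 T) y x) (Set.Icc a x) :=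
    (continuousOn_taylorWithinEval (uniqueDiffOn_Icc hT) hzp).mono hsub
  have hderiv : ∀ σ ∈ Set.Ioo a x,
      HasDerivAt (fun y => taylorWithinEval z p (Set.Icc 0 T) y x)
        (((p ! : ℝ)⁻¹ * (x - σ) ^ p) • iteratedDerivWithin (p + 1) z (Set.Icc 0 T) σ) σ := by
    intro σ hσ
    have hσ' : σ ∈ Set.Ioo 0 T := ⟨lt_of_le_of_lt ha hσ.1, lt_of_lt_of_le hσ.2 hxT⟩
    exact taylorWithinEval_hasDerivAt_Ioo x hT hσ' hzp
      ((hz.differentiableOn_iteratedDerivWithin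
        (by exact_mod_cast Nat.lt_add_of_pos_right two_pos) (uniqueDiffOn_Icc hT)).mono
        Set.Ioo_subset_Icc_self)
  have := intervalIntegral.integral_eq_sub_of_hasDeriv_right_of_le hax hcont
    (fun σ hσ => (hderiv σ hσ).hasDerivWithinAt) hint
  rw [this, taylorWithinEval_self]
end B

section B2
variable {p N : ℕ} {τ : Fin (p + 1) → ℝ}

lemma taylor_remainder_bound {T : ℝ} (hT : 0 < T) {z : ℝ → EuclideanSpace ℝ (Fin N)}
    (hz : ContDiffOn ℝ (p + 2 : ℕ) z (Set.Icc 0 T)) {a b x : ℝ}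
    (ha : 0 ≤ a) (hax : a ≤ x) (hxb : x ≤ b) (hbT : b ≤ T) :
    ‖z x - taylorWithinEval z p (Set.Icc 0 T) a x‖
      ≤ (p ! : ℝ)⁻¹ * (b - a) ^ p
        * ∫ σ in a..b, ‖iteratedDerivWithin (p + 1) z (Set.Icc 0 T) σ‖ := by
  have hxT : x ≤ T := hxb.trans hbT
  have hDcont : ContinuousOn (iteratedDerivWithin (p + 1) z (Set.Icc 0 T)) (Set.Icc 0 T) :=
    hz.continuousOn_iteratedDerivWithin (by exact_mod_cast Nat.add_le_add_left one_le_two p)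
      (uniqueDiffOn_Icc hT)
  have hDint : IntervalIntegrable
      (fun σ => ‖iteratedDerivWithin (p + 1) z (Set.Icc 0 T) σ‖) volume a b :=
    ContinuousOn.intervalIntegrable_of_Icc (hax.trans hxb)
      ((hDcont.mono (Set.Icc_subset_Icc ha hbT)).norm)
  rw [taylor_remainder hT hz ha hax hxT]
  have h1 : ‖∫ σ in a..x, ((p ! : ℝ)⁻¹ * (x - σ) ^ p) •
        iteratedDerivWithin (p + 1) z (Set.Icc 0 T) σ‖
      ≤ ∫ σ in a..x, ((p ! : ℝ)⁻¹ * (b - a) ^ p)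
          * ‖iteratedDerivWithin (p + 1) z (Set.Icc 0 T) σ‖ := by
    refine (intervalIntegral.norm_integral_le_integral_norm hax).trans ?_
    apply intervalIntegral.integral_mono_on hax
    · apply ContinuousOn.intervalIntegrable_of_Icc hax
      exact ((Continuous.continuousOn (by fun_prop : Continuous fun σ : ℝ => (p ! : ℝ)⁻¹ * (x - σ) ^ p)).smul
        (hDcont.mono (Set.Icc_subset_Icc ha hxT))).norm
    · apply ContinuousOn.intervalIntegrable_of_Icc hax
      exact (continuousOn_const.mul
        ((hDcont.mono (Set.Icc_subset_Icc ha hxT)).norm))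
    · intro σ hσ
      rw [norm_smul]
      apply mul_le_mul_of_nonneg_right _ (norm_nonneg _)
      rw [Real.norm_eq_abs, abs_mul, abs_of_nonneg (by positivity : (0:ℝ) ≤ (p ! : ℝ)⁻¹),
        abs_of_nonneg (pow_nonneg (by linarith [hσ.2] : (0:ℝ) ≤ x - σ) p)]
      exact mul_le_mul_of_nonneg_left
        (pow_le_pow_left₀ (by linarith [hσ.2]) (by linarith [hσ.1, hσ.2]) p) (by positivity)
  refine h1.trans ?_
  rw [intervalIntegral.integral_const_mul]
  apply mul_le_mul_of_nonneg_left _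
    (mul_nonneg (by positivity) (pow_nonneg (by linarith) p))
  apply intervalIntegral.integral_mono_interval le_rfl hax hxb
    (Filter.Eventually.of_forall fun σ => norm_nonneg _) hDint
end B2

section B3
variable {p N : ℕ} {τ : Fin (p + 1) → ℝ}

lemma interp_error (hτ : StrictMono τ) (hτ0 : 0 ≤ τ 0) (hτ1 : τ (Fin.last p) ≤ 1)
    {T : ℝ} (hT : 0 < T) {z : ℝ → EuclideanSpace ℝ (Fin N)}
    (hz : ContDiffOn ℝ (p + 2 : ℕ) z (Set.Icc 0 T)) {a b : ℝ}
    (ha : 0 ≤ a) (hab : a < b) (hbT : b ≤ T) {s : ℝ} (hs : s ∈ Set.Icc a b) :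
    ‖z s - interpOn p τ z a b s‖
      ≤ ((p ! : ℝ)⁻¹ * (1 + lagBound p τ)) * ((b - a) ^ p
        * ∫ σ in a..b, ‖iteratedDerivWithin (p + 1) z (Set.Icc 0 T) σ‖) := by
  set g : ℝ → EuclideanSpace ℝ (Fin N) :=
    fun y => taylorWithinEval z p (Set.Icc 0 T) a y with hg
  set c0 : ℝ := (p ! : ℝ)⁻¹ * (b - a) ^ p
      * ∫ σ in a..b, ‖iteratedDerivWithin (p + 1) z (Set.Icc 0 T) σ‖ with hc0
  have hba : b - a ≠ 0 := ne_of_gt (by linarith)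
  have hrem : ∀ x ∈ Set.Icc a b, ‖z x - g x‖ ≤ c0 := fun x hx =>
    taylor_remainder_bound hT hz ha hx.1 hx.2 hbT
  have hc0nn : 0 ≤ c0 := le_trans (norm_nonneg _) (hrem a ⟨le_rfl, hab.le⟩)
  have hsplit : z s - interpOn p τ z a b s
      = (z s - g s) + interpOn p τ (fun y => g y - z y) a b s := by
    rw [interpOn_sub, interpOn_taylor hτ hba z (Set.Icc 0 T) s]
    abel
  rw [hsplit]
  have hxmem : (s - a) / (b - a) ∈ Set.Icc (0:ℝ) 1 := by
    constructor
    · apply div_nonneg (by linarith [hs.1]) (by linarith)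
    · rw [div_le_one (by linarith)]; linarith [hs.2]
  have hnode : ∀ k : Fin (p + 1), a + τ k * (b - a) ∈ Set.Icc a b := by
    intro k
    have h01 := tau_mem hτ hτ0 hτ1 k
    constructor
    · nlinarith [h01.1]
    · nlinarith [h01.2]
  have hPz : ‖interpOn p τ (fun y => g y - z y) a b s‖ ≤ lagBound p τ * c0 := by
    unfold interpOn
    refine (norm_sum_le _ _).trans ?_
    rw [lagBound, Finset.sum_mul]
    refine Finset.sum_le_sum fun k _ => ?_
    rw [norm_smul, Real.norm_eq_abs]
    have h1 : ‖g (a + τ k * (b - a)) - z (a + τ k * (b - a))‖ ≤ c0 := by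
      rw [norm_sub_rev]; exact hrem _ (hnode k)
    exact mul_le_mul (abs_lagB_le k hxmem) h1 (norm_nonneg _) (lagB_sSup_nonneg k)
  calc ‖(z s - g s) + interpOn p τ (fun y => g y - z y) a b s‖
      ≤ ‖z s - g s‖ + ‖interpOn p τ (fun y => g y - z y) a b s‖ := norm_add_le _ _
    _ ≤ c0 + lagBound p τ * c0 := add_le_add (hrem s hs) hPz
    _ = ((p ! : ℝ)⁻¹ * (1 + lagBound p τ)) * ((b - a) ^ p
        * ∫ σ in a..b, ‖iteratedDerivWithin (p + 1) z (Set.Icc 0 T) σ‖) := by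
      rw [hc0]; ring
end B3

section C
variable {p : ℕ} {τ : Fin (p + 1) → ℝ}

noncomputable def nuF (p : ℕ) (τ : Fin (p + 1) → ℝ) (c : Fin (p + 1) → ℝ) : ℝ :=
  ∫ x in (0:ℝ)..1, |∑ j, c j * lagB p τ j x|

lemma nuF_cont_integrand (c : Fin (p + 1) → ℝ) :
    Continuous fun x => |∑ j, c j * lagB p τ j x| := by
  apply Continuous.abs
  exact continuous_finset_sum _ fun j _ => continuous_const.mul (lagB_continuous j)

lemma nuF_nonneg (c : Fin (p + 1) → ℝ) : 0 ≤ nuF p τ c :=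
  intervalIntegral.integral_nonneg zero_le_one fun x _ => abs_nonneg _

lemma nuF_lip : ∀ c c' : Fin (p + 1) → ℝ,
    |nuF p τ c - nuF p τ c'|
      ≤ (∑ j, sSup ((fun x => |lagB p τ j x|) '' Set.Icc (0:ℝ) 1)) * ‖c - c'‖ := by
  intro c c'
  set L := ∑ j, sSup ((fun x => |lagB p τ j x|) '' Set.Icc (0:ℝ) 1) with hL
  have hint : ∀ c : Fin (p+1) → ℝ, IntervalIntegrable
      (fun x => |∑ j, c j * lagB p τ j x|) volume (0:ℝ) 1 :=
    fun c => (nuF_cont_integrand c).intervalIntegrable _ _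
  rw [nuF, nuF, ← intervalIntegral.integral_sub (hint c) (hint c')]
  refine (intervalIntegral.abs_integral_le_integral_abs zero_le_one).trans ?_
  have hbd : ∀ x ∈ Set.Icc (0:ℝ) 1,
      abs (|∑ j, c j * lagB p τ j x| - |∑ j, c' j * lagB p τ j x|) ≤ L * ‖c - c'‖ := by
    intro x hx
    refine (abs_abs_sub_abs_le_abs_sub _ _).trans ?_
    rw [← Finset.sum_sub_distrib]
    refine (Finset.abs_sum_le_sum_abs _ _).trans ?_
    rw [hL, Finset.sum_mul]
    refine Finset.sum_le_sum fun j _ => ?_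
    rw [← sub_mul, abs_mul]
    have h1 : |c j - c' j| ≤ ‖c - c'‖ := by
      simpa using norm_le_pi_norm (c - c') j
    exact le_trans (mul_le_mul h1 (abs_lagB_le j hx) (abs_nonneg _) (norm_nonneg _))
      (le_of_eq (mul_comm _ _))
  calc (∫ x in (0:ℝ)..1, abs (|∑ j, c j * lagB p τ j x| - |∑ j, c' j * lagB p τ j x|))
      ≤ ∫ _x in (0:ℝ)..1, L * ‖c - c'‖ := by
        apply intervalIntegral.integral_mono_on zero_le_one
          (((nuF_cont_integrand c).sub (nuF_cont_integrand c')).abs.intervalIntegrable _ _)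
          intervalIntegrable_const hbd
    _ = L * ‖c - c'‖ := by simp
end C

section C2
variable {p : ℕ} {τ : Fin (p + 1) → ℝ}

lemma nuF_continuous : Continuous (nuF p τ) := by
  have h : LipschitzWith (lagBound p τ).toNNReal (nuF p τ) := by
    apply LipschitzWith.of_dist_le_mul
    intro c c'
    rw [Real.dist_eq, dist_eq_norm, Real.coe_toNNReal _ lagBound_nonneg]
    exact nuF_lip c c'
  exact h.continuous

lemma nuF_zero : nuF p τ (0 : Fin (p + 1) → ℝ) = 0 := by
  simp [nuF]

lemma nuF_homog (c : Fin (p + 1) → ℝ) {t : ℝ} (ht : 0 ≤ t) :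
    nuF p τ (t • c) = t * nuF p τ c := by
  unfold nuF
  have h : ∀ x : ℝ, ∑ j, (t • c) j * lagB p τ j x = t * ∑ j, c j * lagB p τ j x := by
    intro x
    rw [Finset.mul_sum]
    exact Finset.sum_congr rfl fun j _ => by simp [mul_assoc]
  simp_rw [h, abs_mul, abs_of_nonneg ht]
  rw [intervalIntegral.integral_const_mul]

lemma nuF_pos (hτ : StrictMono τ) {c : Fin (p + 1) → ℝ} (hc : c ≠ 0) :
    0 < nuF p τ c := by
  rcases lt_or_eq_of_le (nuF_nonneg c) with h | h
  · exact h
  exfalso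
  set f : ℝ → ℝ := fun x => ∑ j, c j * lagB p τ j x with hf
  have hInt : IntegrableOn (fun x => |f x|) (Set.Ioc (0:ℝ) 1) volume :=
    ((nuF_cont_integrand c).intervalIntegrable 0 1).1
  have h0 : ∫ x in Set.Ioc (0:ℝ) 1, |f x| = 0 := by
    have h' := h.symm
    rwa [nuF, intervalIntegral.integral_of_le zero_le_one] at h'
  have hae : (fun x => |f x|) =ᵐ[volume.restrict (Set.Ioc (0:ℝ) 1)] 0 :=
    (MeasureTheory.integral_eq_zero_iff_of_nonneg (fun x => abs_nonneg _) hInt).mp h0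
  have hZ : Set.Infinite {x : ℝ | f x = 0} := by
    by_contra hfin
    rw [Set.not_infinite] at hfin
    have hnull : volume {x : ℝ | f x = 0} = 0 := hfin.measure_zero volume
    have hAnull : volume.restrict (Set.Ioc (0:ℝ) 1) {x | f x ≠ 0} = 0 := by
      have := hae
      rw [Filter.EventuallyEq, MeasureTheory.ae_iff] at this
      simpa [abs_eq_zero] using this
    have hAmeas : MeasurableSet {x : ℝ | f x ≠ 0} := by
      have hfc : Continuous f :=
        continuous_finset_sum _ fun j _ => continuous_const.mul (lagB_continuous j)
      exact (hfc.measurable (measurableSet_singleton 0)).compl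
    rw [MeasureTheory.Measure.restrict_apply hAmeas] at hAnull
    have hsub : Set.Ioc (0:ℝ) 1 ⊆ ({x | f x ≠ 0} ∩ Set.Ioc 0 1) ∪ {x | f x = 0} := by
      intro x hx
      by_cases hfx : f x = 0
      · exact Or.inr hfx
      · exact Or.inl ⟨hfx, hx⟩
    have := (measure_mono (μ := volume) hsub).trans (measure_union_le _ _)
    rw [hAnull, hnull, add_zero, Real.volume_Ioc] at this
    norm_num at this
  set Q : Polynomial ℝ := Lagrange.interpolate Finset.univ τ c with hQ
  have hQeval : ∀ x, Q.eval x = f x := by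
    intro x
    rw [hQ, Lagrange.interpolate_apply, Polynomial.eval_finset_sum]
    exact Finset.sum_congr rfl fun j _ => by
      rw [Polynomial.eval_mul, Polynomial.eval_C, lagB_eq_eval]
  have hQ0 : Q = 0 := by
    apply Polynomial.eq_zero_of_infinite_isRoot
    apply hZ.mono
    intro x hx
    simp only [Set.mem_setOf_eq, Polynomial.IsRoot, hQeval]
    exact hx
  have hinj : Set.InjOn τ (Finset.univ : Finset (Fin (p + 1))) :=
    fun a _ b _ hab => hτ.injective hab
  apply hc
  funext k
  have := Lagrange.eval_interpolate_at_node c hinj (Finset.mem_univ k)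
  rw [← hQ, hQ0] at this
  simpa using this.symm

lemma scalar_equiv (hτ : StrictMono τ) : ∃ K : ℝ, 0 ≤ K ∧
    ∀ (c : Fin (p + 1) → ℝ) (k : Fin (p + 1)), |c k| ≤ K * nuF p τ c := by
  have hcpt : IsCompact (Metric.sphere (0 : Fin (p + 1) → ℝ) 1) := isCompact_sphere _ _
  have hne : (Metric.sphere (0 : Fin (p + 1) → ℝ) 1).Nonempty :=
    NormedSpace.sphere_nonempty.mpr zero_le_one
  obtain ⟨c₀, hc₀S, hmin⟩ := hcpt.exists_isMinOn hne (nuF_continuous.continuousOn)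
  have hc₀norm : ‖c₀‖ = 1 := by simpa using hc₀S
  have hc₀ne : c₀ ≠ 0 := by
    intro h0
    rw [h0, norm_zero] at hc₀norm
    norm_num at hc₀norm
  set ε := nuF p τ c₀ with hε
  have hεpos : 0 < ε := nuF_pos hτ hc₀ne
  refine ⟨ε⁻¹, inv_nonneg.mpr hεpos.le, ?_⟩
  intro c k
  by_cases hc : c = 0
  · simp [hc, nuF_zero]
  · have hcn : 0 < ‖c‖ := norm_pos_iff.mpr hc
    have hsph : ‖c‖⁻¹ • c ∈ Metric.sphere (0 : Fin (p + 1) → ℝ) 1 := by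
      simp [norm_smul, abs_of_pos (inv_pos.mpr hcn), inv_mul_cancel₀ hcn.ne']
    have h1 : ε ≤ nuF p τ (‖c‖⁻¹ • c) := hmin hsph
    rw [nuF_homog c (inv_nonneg.mpr hcn.le)] at h1
    have h2 : ε * ‖c‖ ≤ nuF p τ c := by
      rw [← le_div_iff₀ hcn] at *
      calc ε ≤ ‖c‖⁻¹ * nuF p τ c := h1
        _ = nuF p τ c / ‖c‖ := by rw [inv_mul_eq_div]
    have h3 : |c k| ≤ ‖c‖ := by simpa using norm_le_pi_norm c k
    calc |c k| ≤ ‖c‖ := h3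
      _ = ε⁻¹ * (ε * ‖c‖) := by field_simp
      _ ≤ ε⁻¹ * nuF p τ c := by
          exact mul_le_mul_of_nonneg_left h2 (inv_nonneg.mpr hεpos.le)
end C2

section D
variable {p N : ℕ} {τ : Fin (p + 1) → ℝ}

lemma inner_mulVec_transpose (A : Matrix (Fin N) (Fin N) ℝ)
    (w v : EuclideanSpace ℝ (Fin N)) :
    ⟪WithLp.toLp 2 (Aᵀ.mulVec w), v⟫_ℝ
      = ⟪w, WithLp.toLp 2 (A.mulVec v)⟫_ℝ := by
  simp only [PiLp.inner_apply, RCLike.inner_apply, conj_trivial, Matrix.mulVec,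
    dotProduct, Matrix.transpose_apply, PiLp.toLp_apply]
  simp_rw [Finset.sum_mul, Finset.mul_sum]
  rw [Finset.sum_comm]
  apply Finset.sum_congr rfl; intro i _; apply Finset.sum_congr rfl; intro j _; ring

lemma vector_equiv (hτ : StrictMono τ) : ∃ K : ℝ, 0 ≤ K ∧
    ∀ (N : ℕ) (w : Fin (p + 1) → EuclideanSpace ℝ (Fin N)) (k : Fin (p + 1)),
      ‖w k‖ ≤ K * ∫ x in (0:ℝ)..1, ‖∑ j, lagB p τ j x • w j‖ := by
  obtain ⟨K, hK0, hK⟩ := scalar_equiv hτ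
  refine ⟨K, hK0, ?_⟩
  intro N w k
  have hPcont : Continuous fun x : ℝ => ∑ j, lagB p τ j x • w j :=
    continuous_finset_sum _ fun j _ => (lagB_continuous j).smul continuous_const
  have hIntNorm : 0 ≤ ∫ x in (0:ℝ)..1, ‖∑ j, lagB p τ j x • w j‖ :=
    intervalIntegral.integral_nonneg zero_le_one fun x _ => norm_nonneg _
  by_cases hw : w k = 0
  · rw [hw, norm_zero]
    exact mul_nonneg hK0 hIntNorm
  · set e : EuclideanSpace ℝ (Fin N) := ‖w k‖⁻¹ • w k with he
    have hwk : 0 < ‖w k‖ := norm_pos_iff.mpr hw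
    have hene : ‖e‖ = 1 := by
      rw [he, norm_smul, norm_inv, norm_norm, inv_mul_cancel₀ hwk.ne']
    set c : Fin (p + 1) → ℝ := fun j => ⟪w j, e⟫_ℝ with hc
    have hck : c k = ‖w k‖ := by
      rw [hc]
      simp only [he, real_inner_smul_right, real_inner_self_eq_norm_sq]
      field_simp
    have hnu : nuF p τ c ≤ ∫ x in (0:ℝ)..1, ‖∑ j, lagB p τ j x • w j‖ := by
      unfold nuF
      apply intervalIntegral.integral_mono_on zero_le_one
        ((nuF_cont_integrand c).intervalIntegrable _ _)
        (hPcont.norm.intervalIntegrable _ _)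
      intro x _
      have hxe : ∑ j, c j * lagB p τ j x = ⟪∑ j, lagB p τ j x • w j, e⟫_ℝ := by
        rw [sum_inner]
        exact Finset.sum_congr rfl fun j _ => by
          rw [real_inner_smul_left, hc, mul_comm]
      rw [hxe]
      exact (abs_real_inner_le_norm _ _).trans (by rw [hene, mul_one])
    calc ‖w k‖ = |c k| := by rw [hck, abs_of_pos hwk]
      _ ≤ K * nuF p τ c := hK c k
      _ ≤ K * ∫ x in (0:ℝ)..1, ‖∑ j, lagB p τ j x • w j‖ :=
          mul_le_mul_of_nonneg_left hnu hK0

lemma interp_change (z : ℝ → EuclideanSpace ℝ (Fin N)) {a b : ℝ} (hab : a < b) :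
    (b - a) * ∫ x in (0:ℝ)..1, ‖∑ j, lagB p τ j x • z (a + τ j * (b - a))‖
      = ∫ s in a..b, ‖interpOn p τ z a b s‖ := by
  have hba : b - a ≠ 0 := ne_of_gt (by linarith)
  have h := intervalIntegral.smul_integral_comp_mul_add (a := (0:ℝ)) (b := 1)
      (f := fun s => ‖interpOn p τ z a b s‖) (b - a) a
  simp only [smul_eq_mul, mul_zero, zero_add, mul_one, sub_add_cancel] at h
  rw [← h]
  congr 1
  apply intervalIntegral.integral_congr
  intro x _
  simp only []
  unfold interpOn
  rw [add_comm ((b-a) * x) a, add_sub_cancel_left, mul_comm (b-a) x,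
    mul_div_assoc, div_self hba, mul_one]
end D

set_option maxHeartbeats 1000000 in
/-- **A posteriori error estimate (Theorem 2).**
The error decomposes as `⟨z_T, U(T) − u(T)⟩ = E_D + E_G + E_C`, with
`|E_D| ≤ ‖z(0)‖ ‖U(0) − u(0)‖`,
`|E_G| ≤ C_p · max_m { Δt_m^{p+1} (‖[U]_{m−1}‖/Δt_m + sup ‖R‖) } · ∫₀ᵀ ‖z^{(p+1)}‖ dt`, and
`|E_C| ≤ C_p' · max_{k,m} ‖Δt_m⁻¹ R̄_k^m‖ · ∫₀ᵀ ‖πz‖ dt`,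
where `C_p, C_p'` depend only on `p` and the interpolation nodes. -/
theorem error_estimate (p : ℕ) (τ : Fin (p + 1) → ℝ)
    (hτ : StrictMono τ) (hτ0 : 0 ≤ τ 0) (hτ1 : τ (Fin.last p) ≤ 1) :
    ∃ Cp Cp' : ℝ,
      ∀ (N M : ℕ) (hM : 0 < M) (T : ℝ) (_hT : 0 < T)
        (t : ℕ → ℝ) (_ht0 : t 0 = 0) (_htM : t M = T)
        (_htlt : ∀ m < M, t m < t (m + 1))
        (u U z u' : ℝ → EuclideanSpace ℝ (Fin N))
        (Um Um' : ℕ → ℝ → EuclideanSpace ℝ (Fin N))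
        (f : EuclideanSpace ℝ (Fin N) → ℝ → EuclideanSpace ℝ (Fin N))
        (A : ℝ → Matrix (Fin N) (Fin N) ℝ)
        (zT : EuclideanSpace ℝ (Fin N))
        -- f is continuous
        (_hf : Continuous fun q : EuclideanSpace ℝ (Fin N) × ℝ => f q.1 q.2)
        -- Ā is continuous and satisfies the averaged-Jacobian property
        (_hA : ContinuousOn A (Set.Icc 0 T))
        (_hAavg : ∀ s ∈ Set.Icc 0 T, (A s).mulVec (U s - u s) = f (U s) s - f (u s) s)
        -- u is a continuously differentiable solution of the ODE
        (_hu : ∀ s ∈ Set.Icc 0 T, HasDerivWithinAt u (u' s) (Set.Icc 0 T) s)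
        (_hu'c : ContinuousOn u' (Set.Icc 0 T))
        (_hode : ∀ s ∈ Set.Ioc 0 T, u' s = f (u s) s)
        -- U is piecewise smooth: on `(t m, t (m+1)]` it agrees with the C¹ function `Um m`
        (_hUpw : ∀ m < M, ∀ s ∈ Set.Ioc (t m) (t (m + 1)), Um m s = U s)
        (_hUm : ∀ m < M, ∀ s ∈ Set.Icc (t m) (t (m + 1)),
          HasDerivWithinAt (Um m) (Um' m s) (Set.Icc (t m) (t (m + 1))) s)
        (_hUm'c : ∀ m < M, ContinuousOn (Um' m) (Set.Icc (t m) (t (m + 1))))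
        -- z is (p+2)-times continuously differentiable and solves the dual problem
        (_hzreg : ContDiffOn ℝ (p + 2 : ℕ) z (Set.Icc 0 T))
        (_hdual : ∀ s ∈ Set.Ico 0 T,
          HasDerivWithinAt z (WithLp.toLp 2 (-(Matrix.mulVec (A s)ᵀ (z s)))) (Set.Icc 0 T) s)
        (_hzT : z T = zT),
        -- the error decomposition and the three bounds
        let Δt : ℕ → ℝ := fun m => t (m + 1) - t m
        let jU : ℕ → EuclideanSpace ℝ (Fin N) := fun m => Um m (t m) - U (t m)
        let R : ℕ → ℝ → EuclideanSpace ℝ (Fin N) := fun m s => Um' m s - f (U s) s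
        let Pz : ℕ → ℝ → EuclideanSpace ℝ (Fin N) :=
          fun m s => interpOn p τ z (t m) (t (m + 1)) s
        let Rbar : ℕ → Fin (p + 1) → EuclideanSpace ℝ (Fin N) := fun m k =>
          lagB p τ k 0 • jU m
            + ∫ s in t m..t (m + 1), lagB p τ k ((s - t m) / Δt m) • R m s
        let ED : ℝ := ⟪z 0, U 0 - u 0⟫_ℝ
        let EG : ℝ := ∑ m ∈ Finset.range M,
          (⟪z (t m) - Pz m (t m), jU m⟫_ℝ
            + ∫ s in t m..t (m + 1), ⟪z s - Pz m s, R m s⟫_ℝ)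
        let EC : ℝ := ∑ m ∈ Finset.range M,
          (⟪Pz m (t m), jU m⟫_ℝ
            + ∫ s in t m..t (m + 1), ⟪Pz m s, R m s⟫_ℝ)
        (⟪zT, U T - u T⟫_ℝ = ED + EG + EC)
        ∧ |ED| ≤ ‖z 0‖ * ‖U 0 - u 0‖
        ∧ |EG| ≤ Cp
            * ((Finset.range M).sup' (Finset.nonempty_range_iff.mpr hM.ne')
                fun m => Δt m ^ (p + 1)
                  * (‖jU m‖ / Δt m + ⨆ s ∈ Set.Ioo (t m) (t (m + 1)), ‖R m s‖))
            * ∫ s in (0:ℝ)..T, ‖iteratedDerivWithin (p + 1) z (Set.Icc 0 T) s‖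
        ∧ |EC| ≤ Cp'
            * ((Finset.range M).sup' (Finset.nonempty_range_iff.mpr hM.ne')
                fun m => Finset.univ.sup' Finset.univ_nonempty
                  fun k : Fin (p + 1) => ‖Rbar m k‖ / Δt m)
            * ∑ m ∈ Finset.range M, ∫ s in t m..t (m + 1), ‖Pz m s‖ := by
  obtain ⟨K, hK0, hKle⟩ := vector_equiv (p := p) (τ := τ) hτ
  set CpC : ℝ := (p ! : ℝ)⁻¹ * (1 + lagBound p τ) with hCpC
  have hCpC0 : 0 ≤ CpC := by
    rw [hCpC]
    have := lagBound_nonneg (p := p) (τ := τ)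
    positivity
  refine ⟨CpC, (p + 1 : ℝ) * K, ?_⟩
  intro N M hM T hT t ht0 htM htlt u U z u' Um Um' f A zT hf hA hAavg hu hu'c
    hode hUpw hUm hUm'c hzreg hdual hzT
  intro Δt jU R Pz Rbar ED EG EC
  -- basic partition facts
  have hmono : ∀ j, j ≤ M → ∀ i, i ≤ j → t i ≤ t j := by
    intro j
    induction j with
    | zero => intro _ i hi; rw [Nat.le_zero.mp hi]
    | succ n ih =>
      intro hn i hi
      by_cases hin : i = n + 1
      · rw [hin]
      · have h1 : i ≤ n := by omega
        exact (ih (by omega) i h1).trans (htlt n (by omega)).le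
  have h0t : ∀ m, m ≤ M → 0 ≤ t m := fun m hm => ht0 ▸ hmono m hm 0 (Nat.zero_le m)
  have htT : ∀ m, m ≤ M → t m ≤ T := fun m hm => htM ▸ hmono M le_rfl m hm
  have hab : ∀ m, m < M → t m < t (m + 1) := htlt
  have hsub : ∀ m, m < M → Set.Icc (t m) (t (m + 1)) ⊆ Set.Icc 0 T :=
    fun m hm => Set.Icc_subset_Icc (h0t m (le_of_lt hm)) (htT (m + 1) hm)
  -- continuity facts
  have hzc : ContinuousOn z (Set.Icc 0 T) := hzreg.continuousOn
  have huc : ContinuousOn u (Set.Icc 0 T) := fun s hs => (hu s hs).continuousWithinAt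
  have hUmc : ∀ m, m < M → ContinuousOn (Um m) (Set.Icc (t m) (t (m + 1))) :=
    fun m hm s hs => (hUm m hm s hs).continuousWithinAt
  have hRcc : ∀ m, m < M →
      ContinuousOn (fun s => Um' m s - f (Um m s) s) (Set.Icc (t m) (t (m + 1))) := by
    intro m hm
    exact (hUm'c m hm).sub (hf.comp_continuousOn (f := fun s => (Um m s, s)) ((hUmc m hm).prodMk continuousOn_id))
  have hPzc : ∀ m, Continuous (Pz m) := by
    intro m
    exact continuous_finset_sum _ fun k _ =>
      (((lagB_continuous k).comp (by continuity)).smul continuous_const)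
  have hDc : ContinuousOn (iteratedDerivWithin (p + 1) z (Set.Icc 0 T)) (Set.Icc 0 T) :=
    hzreg.continuousOn_iteratedDerivWithin
      (by exact_mod_cast Nat.add_le_add_left one_le_two p) (uniqueDiffOn_Icc hT)
  have hDint : ∀ m, m < M → IntervalIntegrable
      (fun s => ‖iteratedDerivWithin (p + 1) z (Set.Icc 0 T) s‖) volume (t m) (t (m + 1)) :=
    fun m hm => ContinuousOn.intervalIntegrable_of_Icc (hab m hm).le
      ((hDc.mono (hsub m hm)).norm)
  -- R agrees with its continuous version a.e.
  have hUae : ∀ m, m < M → ∀ s ∈ Set.uIoc (t m) (t (m + 1)),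
      R m s = Um' m s - f (Um m s) s := by
    intro m hm s hs
    rw [Set.uIoc_of_le (hab m hm).le] at hs
    show Um' m s - f (U s) s = _
    rw [hUpw m hm s hs]
  -- generic integrability / congruence for pairings against R
  have hpair : ∀ m, m < M → ∀ g : ℝ → EuclideanSpace ℝ (Fin N),
      ContinuousOn g (Set.Icc (t m) (t (m + 1))) →
      IntervalIntegrable (fun s => ⟪g s, R m s⟫_ℝ) volume (t m) (t (m + 1)) ∧
      (∫ s in t m..t (m + 1), ⟪g s, R m s⟫_ℝ)
        = ∫ s in t m..t (m + 1), ⟪g s, Um' m s - f (Um m s) s⟫_ℝ := by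
    intro m hm g hg
    have hcint : IntervalIntegrable (fun s => ⟪g s, Um' m s - f (Um m s) s⟫_ℝ)
        volume (t m) (t (m + 1)) :=
      ContinuousOn.intervalIntegrable_of_Icc (hab m hm).le (hg.inner (hRcc m hm))
    constructor
    · refine hcint.congr ?_
      have hmem : ∀ᵐ s ∂(volume.restrict (Set.uIoc (t m) (t (m + 1)))),
          s ∈ Set.uIoc (t m) (t (m + 1)) :=
        MeasureTheory.ae_restrict_mem measurableSet_uIoc
      intro s hs
      simp only [hUae m hm s hs]
    · apply intervalIntegral.integral_congr_ae
      apply Filter.Eventually.of_forall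
      intro s hs
      rw [hUae m hm s hs]
  have hpairz : ∀ m, m < M → IntervalIntegrable (fun s => ⟪z s, R m s⟫_ℝ)
      volume (t m) (t (m + 1)) :=
    fun m hm => (hpair m hm z (hzc.mono (hsub m hm))).1
  have hideq : ∀ m, m < M →
      ⟪z (t (m+1)), U (t (m+1)) - u (t (m+1))⟫_ℝ - ⟪z (t m), U (t m) - u (t m)⟫_ℝ
        = ⟪z (t m), jU m⟫_ℝ + ∫ s in t m..t (m+1), ⟪z s, R m s⟫_ℝ := by
    intro m hm
    have habm : t m < t (m+1) := hab m hm
    have hIsub := hsub m hm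
    have hgcont : ContinuousOn (fun s => ⟪z s, Um m s - u s⟫_ℝ)
        (Set.Icc (t m) (t (m+1))) :=
      ((hzc.mono hIsub).inner ((hUmc m hm).sub (huc.mono hIsub)))
    have hgderiv : ∀ s ∈ Set.Ioo (t m) (t (m+1)),
        HasDerivAt (fun s => ⟪z s, Um m s - u s⟫_ℝ)
          (⟪z s, Um' m s - f (Um m s) s⟫_ℝ) s := by
      intro s hs
      have hs0T : s ∈ Set.Ioo 0 T :=
        ⟨lt_of_le_of_lt (h0t m hm.le) hs.1, lt_of_lt_of_le hs.2 (htT (m+1) hm)⟩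
      have hnhds : Set.Icc 0 T ∈ nhds s := Icc_mem_nhds hs0T.1 hs0T.2
      have hznb : Set.Icc (t m) (t (m+1)) ∈ nhds s := Icc_mem_nhds hs.1 hs.2
      have hzD : HasDerivAt z (WithLp.toLp 2 (-(Matrix.mulVec (A s)ᵀ (z s)))) s :=
        (hdual s ⟨hs0T.1.le, hs0T.2⟩).hasDerivAt hnhds
      have huD : HasDerivAt u (u' s) s :=
        (hu s ⟨hs0T.1.le, hs0T.2.le⟩).hasDerivAt hnhds
      have hUD : HasDerivAt (Um m) (Um' m s) s :=
        (hUm m hm s (Set.Ioo_subset_Icc_self hs)).hasDerivAt hznb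
      have h := HasDerivAt.inner ℝ hzD (hUD.sub huD)
      have e1 : Um m s = U s := hUpw m hm s ⟨hs.1, hs.2.le⟩
      have e2 : u' s = f (u s) s := hode s ⟨hs0T.1, hs0T.2.le⟩
      have e3 : ⟪WithLp.toLp 2 ((A s)ᵀ *ᵥ (z s).ofLp), U s - u s⟫_ℝ
          = ⟪z s, f (U s) s - f (u s) s⟫_ℝ := by
        rw [inner_mulVec_transpose, WithLp.ofLp_sub, hAavg s ⟨hs0T.1.le, hs0T.2.le⟩]; rfl
      refine h.congr_deriv ?_
      rw [Pi.sub_apply, e1, e2, WithLp.toLp_neg, inner_neg_left]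
      rw [e3]
      simp only [inner_sub_right]
      ring
    have hcint : IntervalIntegrable (fun s => ⟪z s, Um' m s - f (Um m s) s⟫_ℝ)
        volume (t m) (t (m + 1)) :=
      ContinuousOn.intervalIntegrable_of_Icc habm.le
        ((hzc.mono hIsub).inner (hRcc m hm))
    have hftc := intervalIntegral.integral_eq_sub_of_hasDeriv_right_of_le habm.le
      hgcont (fun s hs => (hgderiv s hs).hasDerivWithinAt) hcint
    rw [(hpair m hm z (hzc.mono hIsub)).2, hftc]
    have e4 : Um m (t (m+1)) = U (t (m+1)) := hUpw m hm _ ⟨habm, le_rfl⟩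
    rw [e4]
    show _ = ⟪z (t m), Um m (t m) - U (t m)⟫_ℝ + _
    simp only [inner_sub_right]
    ring
  have htel : ⟪z T, U T - u T⟫_ℝ - ⟪z 0, U 0 - u 0⟫_ℝ
      = ∑ m ∈ Finset.range M,
          (⟪z (t m), jU m⟫_ℝ + ∫ s in t m..t (m+1), ⟪z s, R m s⟫_ℝ) := by
    have h1 : ∑ m ∈ Finset.range M,
        (⟪z (t m), jU m⟫_ℝ + ∫ s in t m..t (m+1), ⟪z s, R m s⟫_ℝ)
        = ∑ m ∈ Finset.range M,
          ((fun n => ⟪z (t n), U (t n) - u (t n)⟫_ℝ) (m+1)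
            - (fun n => ⟪z (t n), U (t n) - u (t n)⟫_ℝ) m) :=
      Finset.sum_congr rfl fun m hm => (hideq m (Finset.mem_range.mp hm)).symm
    rw [h1, Finset.sum_range_sub (fun n => ⟪z (t n), U (t n) - u (t n)⟫_ℝ), ht0, htM]
  have hPzint : ∀ m, m < M →
      IntervalIntegrable (fun s => ⟪Pz m s, R m s⟫_ℝ) volume (t m) (t (m+1)) :=
    fun m hm => (hpair m hm (Pz m) ((hPzc m).continuousOn)).1
  have hzPzint : ∀ m, m < M →
      IntervalIntegrable (fun s => ⟪z s - Pz m s, R m s⟫_ℝ) volume (t m) (t (m+1)) :=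
    fun m hm => (hpair m hm (fun s => z s - Pz m s)
      ((hzc.mono (hsub m hm)).sub ((hPzc m).continuousOn))).1
  have hsumGC : EG + EC = ∑ m ∈ Finset.range M,
      (⟪z (t m), jU m⟫_ℝ + ∫ s in t m..t (m+1), ⟪z s, R m s⟫_ℝ) := by
    have hEGdef : EG = ∑ m ∈ Finset.range M,
        (⟪z (t m) - Pz m (t m), jU m⟫_ℝ
          + ∫ s in t m..t (m + 1), ⟪z s - Pz m s, R m s⟫_ℝ) := rfl
    have hECdef : EC = ∑ m ∈ Finset.range M,
        (⟪Pz m (t m), jU m⟫_ℝ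
          + ∫ s in t m..t (m + 1), ⟪Pz m s, R m s⟫_ℝ) := rfl
    rw [hEGdef, hECdef, ← Finset.sum_add_distrib]
    apply Finset.sum_congr rfl
    intro m hm'
    have hm := Finset.mem_range.mp hm'
    have hIntEq : (∫ s in t m..t (m+1), ⟪z s - Pz m s, R m s⟫_ℝ)
        + (∫ s in t m..t (m+1), ⟪Pz m s, R m s⟫_ℝ)
        = ∫ s in t m..t (m+1), ⟪z s, R m s⟫_ℝ := by
      rw [← intervalIntegral.integral_add (hzPzint m hm) (hPzint m hm)]
      apply intervalIntegral.integral_congr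
      intro s _
      simp only [inner_sub_left]
      ring
    have hJmp : (⟪z (t m) - Pz m (t m), jU m⟫_ℝ : ℝ) + ⟪Pz m (t m), jU m⟫_ℝ
        = ⟪z (t m), jU m⟫_ℝ := by
      simp only [inner_sub_left]; ring
    linarith [hIntEq, hJmp]
  refine ⟨?_, ?_, ?_, ?_⟩
  · have hEDdef : ED = ⟪z 0, U 0 - u 0⟫_ℝ := rfl
    rw [← hzT]
    linarith [htel, hsumGC, hEDdef]
  · exact abs_real_inner_le_norm _ _
  · -- EG bound
    have hEGdef : EG = ∑ m ∈ Finset.range M,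
        (⟪z (t m) - Pz m (t m), jU m⟫_ℝ
          + ∫ s in t m..t (m + 1), ⟪z s - Pz m s, R m s⟫_ℝ) := rfl
    have hIm0 : ∀ m, m < M →
        0 ≤ ∫ s in t m..t (m+1), ‖iteratedDerivWithin (p + 1) z (Set.Icc 0 T) s‖ :=
      fun m hm => intervalIntegral.integral_nonneg (hab m hm).le fun s _ => norm_nonneg _
    have hperm : ∀ m, m < M →
        |⟪z (t m) - Pz m (t m), jU m⟫_ℝ
            + ∫ s in t m..t (m+1), ⟪z s - Pz m s, R m s⟫_ℝ|
          ≤ CpC * ((Finset.range M).sup' (Finset.nonempty_range_iff.mpr hM.ne')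
              fun m => Δt m ^ (p + 1)
                * (‖jU m‖ / Δt m + ⨆ s ∈ Set.Ioo (t m) (t (m + 1)), ‖R m s‖))
            * ∫ s in t m..t (m+1), ‖iteratedDerivWithin (p + 1) z (Set.Icc 0 T) s‖ := by
      intro m hm
      have habm : t m < t (m+1) := hab m hm
      have hba : t (m+1) - t m ≠ 0 := ne_of_gt (by linarith)
      have hErr : ∀ s ∈ Set.Icc (t m) (t (m+1)), ‖z s - Pz m s‖
          ≤ CpC * ((t (m+1) - t m) ^ p
            * ∫ σ in t m..t (m+1), ‖iteratedDerivWithin (p + 1) z (Set.Icc 0 T) σ‖) := by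
        intro s hs
        rw [hCpC]
        exact interp_error hτ hτ0 hτ1 hT hzreg (h0t m hm.le) habm (htT (m+1) hm) hs
      have hEm0 : 0 ≤ CpC * ((t (m+1) - t m) ^ p
          * ∫ σ in t m..t (m+1), ‖iteratedDerivWithin (p + 1) z (Set.Icc 0 T) σ‖) :=
        le_trans (norm_nonneg _) (hErr (t m) ⟨le_rfl, habm.le⟩)
      obtain ⟨B, hB⟩ := IsCompact.exists_bound_of_continuousOn isCompact_Icc (hRcc m hm)
      have hbddS : BddAbove (Set.range fun s =>
          ⨆ _ : s ∈ Set.Ioo (t m) (t (m+1)), ‖R m s‖) := by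
        refine ⟨max B 0, ?_⟩
        rintro x ⟨s, rfl⟩
        show (⨆ _ : s ∈ Set.Ioo (t m) (t (m+1)), ‖R m s‖) ≤ max B 0
        by_cases hs : s ∈ Set.Ioo (t m) (t (m+1))
        · rw [ciSup_pos hs]
          have hReq : R m s = Um' m s - f (Um m s) s := by
            apply hUae m hm s
            rw [Set.uIoc_of_le habm.le]
            exact Set.Ioo_subset_Ioc_self hs
          rw [hReq]
          exact le_max_of_le_left (hB s (Set.Ioo_subset_Icc_self hs))
        · simp only [hs]
          rw [Real.iSup_of_isEmpty]
          exact le_max_right _ _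
      have hSle : ∀ s ∈ Set.Ioo (t m) (t (m+1)),
          ‖R m s‖ ≤ ⨆ s ∈ Set.Ioo (t m) (t (m+1)), ‖R m s‖ := by
        intro s hs
        have h1 := le_ciSup hbddS s
        rwa [ciSup_pos hs] at h1
      have hS0 : 0 ≤ ⨆ s ∈ Set.Ioo (t m) (t (m+1)), ‖R m s‖ :=
        Real.iSup_nonneg fun s => Real.iSup_nonneg fun _ => norm_nonneg _
      have h1 : |⟪z (t m) - Pz m (t m), jU m⟫_ℝ|
          ≤ (CpC * ((t (m+1) - t m) ^ p
            * ∫ σ in t m..t (m+1), ‖iteratedDerivWithin (p + 1) z (Set.Icc 0 T) σ‖))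
            * ‖jU m‖ :=
        (abs_real_inner_le_norm _ _).trans
          (mul_le_mul_of_nonneg_right (hErr (t m) ⟨le_rfl, habm.le⟩) (norm_nonneg _))
      have h2 : |∫ s in t m..t (m+1), ⟪z s - Pz m s, R m s⟫_ℝ|
          ≤ ((CpC * ((t (m+1) - t m) ^ p
            * ∫ σ in t m..t (m+1), ‖iteratedDerivWithin (p + 1) z (Set.Icc 0 T) σ‖))
            * ⨆ s ∈ Set.Ioo (t m) (t (m+1)), ‖R m s‖) * (t (m+1) - t m) := by
        have hbae : ∀ᵐ x : ℝ, x ≠ t (m+1) := by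
          refine MeasureTheory.ae_iff.mpr ?_
          have : {x : ℝ | ¬ x ≠ t (m+1)} = {t (m+1)} := by
            ext x; simp
          rw [this]
          exact Real.volume_singleton
        have hbnd := intervalIntegral.norm_integral_le_of_norm_le_const_ae
          (a := t m) (b := t (m+1))
          (f := fun s => ⟪z s - Pz m s, R m s⟫_ℝ)
          (C := (CpC * ((t (m+1) - t m) ^ p
            * ∫ σ in t m..t (m+1), ‖iteratedDerivWithin (p + 1) z (Set.Icc 0 T) σ‖))
            * ⨆ s ∈ Set.Ioo (t m) (t (m+1)), ‖R m s‖) ?_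
        · rw [Real.norm_eq_abs] at hbnd
          rwa [abs_of_pos (by linarith : (0:ℝ) < t (m+1) - t m)] at hbnd
        · filter_upwards [hbae] with x hxb hxI
          rw [Set.uIoc_of_le habm.le] at hxI
          have hxIoo : x ∈ Set.Ioo (t m) (t (m+1)) := ⟨hxI.1, lt_of_le_of_ne hxI.2 hxb⟩
          rw [Real.norm_eq_abs]
          exact (abs_real_inner_le_norm _ _).trans
            (mul_le_mul (hErr x (Set.Ioo_subset_Icc_self hxIoo)) (hSle x hxIoo)
              (norm_nonneg _) hEm0)
      have hkey : (CpC * ((t (m+1) - t m) ^ p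
            * ∫ σ in t m..t (m+1), ‖iteratedDerivWithin (p + 1) z (Set.Icc 0 T) σ‖))
            * ‖jU m‖
          + ((CpC * ((t (m+1) - t m) ^ p
            * ∫ σ in t m..t (m+1), ‖iteratedDerivWithin (p + 1) z (Set.Icc 0 T) σ‖))
            * ⨆ s ∈ Set.Ioo (t m) (t (m+1)), ‖R m s‖) * (t (m+1) - t m)
          = CpC * ((t (m+1) - t m) ^ (p+1)
              * (‖jU m‖ / (t (m+1) - t m) + ⨆ s ∈ Set.Ioo (t m) (t (m+1)), ‖R m s‖))
            * ∫ σ in t m..t (m+1), ‖iteratedDerivWithin (p + 1) z (Set.Icc 0 T) σ‖ := by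
        field_simp
        ring
      have hXle : (t (m+1) - t m) ^ (p+1)
            * (‖jU m‖ / (t (m+1) - t m) + ⨆ s ∈ Set.Ioo (t m) (t (m+1)), ‖R m s‖)
          ≤ (Finset.range M).sup' (Finset.nonempty_range_iff.mpr hM.ne')
              fun m => Δt m ^ (p + 1)
                * (‖jU m‖ / Δt m + ⨆ s ∈ Set.Ioo (t m) (t (m + 1)), ‖R m s‖) :=
        Finset.le_sup' (f := fun m => Δt m ^ (p + 1)
          * (‖jU m‖ / Δt m + ⨆ s ∈ Set.Ioo (t m) (t (m + 1)), ‖R m s‖))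
          (Finset.mem_range.mpr hm)
      calc |⟪z (t m) - Pz m (t m), jU m⟫_ℝ
            + ∫ s in t m..t (m+1), ⟪z s - Pz m s, R m s⟫_ℝ|
          ≤ |⟪z (t m) - Pz m (t m), jU m⟫_ℝ|
            + |∫ s in t m..t (m+1), ⟪z s - Pz m s, R m s⟫_ℝ| := abs_add_le _ _
        _ ≤ _ := add_le_add h1 h2
        _ = CpC * ((t (m+1) - t m) ^ (p+1)
              * (‖jU m‖ / (t (m+1) - t m) + ⨆ s ∈ Set.Ioo (t m) (t (m+1)), ‖R m s‖))
            * ∫ σ in t m..t (m+1), ‖iteratedDerivWithin (p + 1) z (Set.Icc 0 T) σ‖ := hkey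
        _ ≤ _ := by
            apply mul_le_mul_of_nonneg_right _ (hIm0 m hm)
            exact mul_le_mul_of_nonneg_left hXle hCpC0
    calc |EG| ≤ ∑ m ∈ Finset.range M,
          |⟪z (t m) - Pz m (t m), jU m⟫_ℝ
            + ∫ s in t m..t (m+1), ⟪z s - Pz m s, R m s⟫_ℝ| := by
          rw [hEGdef]; exact Finset.abs_sum_le_sum_abs _ _
      _ ≤ ∑ m ∈ Finset.range M,
            CpC * ((Finset.range M).sup' (Finset.nonempty_range_iff.mpr hM.ne')
              fun m => Δt m ^ (p + 1)
                * (‖jU m‖ / Δt m + ⨆ s ∈ Set.Ioo (t m) (t (m + 1)), ‖R m s‖))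
            * ∫ s in t m..t (m+1), ‖iteratedDerivWithin (p + 1) z (Set.Icc 0 T) s‖ :=
          Finset.sum_le_sum fun m hm => hperm m (Finset.mem_range.mp hm)
      _ = CpC * ((Finset.range M).sup' (Finset.nonempty_range_iff.mpr hM.ne')
              fun m => Δt m ^ (p + 1)
                * (‖jU m‖ / Δt m + ⨆ s ∈ Set.Ioo (t m) (t (m + 1)), ‖R m s‖))
            * ∑ m ∈ Finset.range M,
              ∫ s in t m..t (m+1), ‖iteratedDerivWithin (p + 1) z (Set.Icc 0 T) s‖ := by
          rw [Finset.mul_sum]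
      _ = _ := by
          rw [intervalIntegral.sum_integral_adjacent_intervals
            (fun k hk => hDint k hk), ht0, htM]
  · -- EC bound
    have hECdef : EC = ∑ m ∈ Finset.range M,
        (⟪Pz m (t m), jU m⟫_ℝ
          + ∫ s in t m..t (m + 1), ⟪Pz m s, R m s⟫_ℝ) := rfl
    -- per-interval identity
    have hterm : ∀ m, m < M →
        ⟪Pz m (t m), jU m⟫_ℝ + (∫ s in t m..t (m + 1), ⟪Pz m s, R m s⟫_ℝ)
          = ∑ k, ⟪z (t m + τ k * (t (m+1) - t m)), Rbar m k⟫_ℝ := by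
      intro m hm
      have habm : t m < t (m+1) := hab m hm
      have hba : t (m+1) - t m ≠ 0 := ne_of_gt (by linarith)
      have hlagc : ∀ k : Fin (p+1),
          Continuous fun s : ℝ => lagB p τ k ((s - t m) / (t (m+1) - t m)) :=
        fun k => (lagB_continuous k).comp
          ((continuous_sub_right (t m)).div_const _)
      have hGint : ∀ k : Fin (p+1), IntervalIntegrable
          (fun s => lagB p τ k ((s - t m) / (t (m+1) - t m))
            • (Um' m s - f (Um m s) s)) volume (t m) (t (m+1)) :=
        fun k => ContinuousOn.intervalIntegrable_of_Icc habm.le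
          (((hlagc k).continuousOn).smul (hRcc m hm))
      -- jump part
      have hPz0 : Pz m (t m) = ∑ k, lagB p τ k 0 • z (t m + τ k * (t (m+1) - t m)) := by
        show interpOn p τ z (t m) (t (m+1)) (t m) = _
        unfold interpOn
        rw [sub_self, zero_div]
      have hjump : ⟪Pz m (t m), jU m⟫_ℝ
          = ∑ k, lagB p τ k 0 * ⟪z (t m + τ k * (t (m+1) - t m)), jU m⟫_ℝ := by
        rw [hPz0, sum_inner]
        exact Finset.sum_congr rfl fun k _ => real_inner_smul_left _ _ _
      -- integral part
      have hint1 : (∫ s in t m..t (m + 1), ⟪Pz m s, R m s⟫_ℝ)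
          = ∫ s in t m..t (m + 1), ⟪Pz m s, Um' m s - f (Um m s) s⟫_ℝ :=
        (hpair m hm (Pz m) ((hPzc m).continuousOn)).2
      have hint2 : (∫ s in t m..t (m + 1), ⟪Pz m s, Um' m s - f (Um m s) s⟫_ℝ)
          = ∑ k, ∫ s in t m..t (m + 1),
              lagB p τ k ((s - t m) / (t (m+1) - t m))
                * ⟪z (t m + τ k * (t (m+1) - t m)), Um' m s - f (Um m s) s⟫_ℝ := by
        rw [← intervalIntegral.integral_finset_sum]
        · apply intervalIntegral.integral_congr
          intro s _
          show (⟪Pz m s, Um' m s - f (Um m s) s⟫_ℝ : ℝ) = _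
          have : Pz m s = ∑ k, lagB p τ k ((s - t m) / (t (m+1) - t m))
              • z (t m + τ k * (t (m+1) - t m)) := rfl
          rw [this, sum_inner]
          exact Finset.sum_congr rfl fun k _ => real_inner_smul_left _ _ _
        · intro k _
          apply ContinuousOn.intervalIntegrable_of_Icc habm.le
          exact ((hlagc k).continuousOn).mul
            (continuousOn_const.inner (hRcc m hm))
      have hint3 : ∀ k : Fin (p+1),
          (∫ s in t m..t (m + 1),
              lagB p τ k ((s - t m) / (t (m+1) - t m))
                * ⟪z (t m + τ k * (t (m+1) - t m)), Um' m s - f (Um m s) s⟫_ℝ)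
            = ⟪z (t m + τ k * (t (m+1) - t m)),
                ∫ s in t m..t (m + 1), lagB p τ k ((s - t m) / (t (m+1) - t m))
                  • (Um' m s - f (Um m s) s)⟫_ℝ := by
        intro k
        have hcomm := (innerSL ℝ (z (t m + τ k * (t (m+1) - t m)))).intervalIntegral_comp_comm
          (hGint k)
        simp only [innerSL_apply_apply] at hcomm
        rw [← hcomm]
        apply intervalIntegral.integral_congr
        intro s _
        exact (real_inner_smul_right _ _ _).symm
      have hint4 : ∀ k : Fin (p+1),
          (∫ s in t m..t (m + 1), lagB p τ k ((s - t m) / (t (m+1) - t m))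
              • (Um' m s - f (Um m s) s))
            = ∫ s in t m..t (m + 1), lagB p τ k ((s - t m) / (t (m+1) - t m)) • R m s := by
        intro k
        apply intervalIntegral.integral_congr_ae
        apply Filter.Eventually.of_forall
        intro s hs
        rw [hUae m hm s hs]
      have hRbardef : ∀ k : Fin (p+1), Rbar m k = lagB p τ k 0 • jU m
          + ∫ s in t m..t (m + 1),
              lagB p τ k ((s - t m) / (t (m+1) - t m)) • R m s := fun k => rfl
      rw [hjump, hint1, hint2, ← Finset.sum_add_distrib]
      apply Finset.sum_congr rfl
      intro k _
      rw [hint3 k, hint4 k, hRbardef k, inner_add_right, real_inner_smul_right]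
    -- per-interval bound
    have hbound : ∀ m, m < M →
        |⟪Pz m (t m), jU m⟫_ℝ + (∫ s in t m..t (m + 1), ⟪Pz m s, R m s⟫_ℝ)|
          ≤ ((p + 1 : ℝ) * K)
            * ((Finset.range M).sup' (Finset.nonempty_range_iff.mpr hM.ne')
                fun m => Finset.univ.sup' Finset.univ_nonempty
                  fun k : Fin (p + 1) => ‖Rbar m k‖ / Δt m)
            * ∫ s in t m..t (m + 1), ‖Pz m s‖ := by
      intro m hm
      have habm : t m < t (m+1) := hab m hm
      have hΔpos : (0:ℝ) < t (m+1) - t m := by linarith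
      set maxR := (Finset.range M).sup' (Finset.nonempty_range_iff.mpr hM.ne')
          (fun m => Finset.univ.sup' Finset.univ_nonempty
            fun k : Fin (p + 1) => ‖Rbar m k‖ / Δt m) with hmaxR
      have hRble : ∀ k : Fin (p+1), ‖Rbar m k‖ ≤ maxR * (t (m+1) - t m) := by
        intro k
        have h1 : ‖Rbar m k‖ / Δt m ≤ Finset.univ.sup' Finset.univ_nonempty
            (fun k : Fin (p + 1) => ‖Rbar m k‖ / Δt m) :=
          Finset.le_sup' (fun k : Fin (p + 1) => ‖Rbar m k‖ / Δt m)
            (Finset.mem_univ k)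
        have h2 : Finset.univ.sup' Finset.univ_nonempty
            (fun k : Fin (p + 1) => ‖Rbar m k‖ / Δt m) ≤ maxR :=
          Finset.le_sup' (f := fun m => Finset.univ.sup' Finset.univ_nonempty
            fun k : Fin (p + 1) => ‖Rbar m k‖ / Δt m) (Finset.mem_range.mpr hm)
        have h3 : ‖Rbar m k‖ / (t (m+1) - t m) ≤ maxR := le_trans h1 h2
        rwa [div_le_iff₀ hΔpos] at h3
      have hJ0 : 0 ≤ ∫ x in (0:ℝ)..1,
          ‖∑ j, lagB p τ j x • z (t m + τ j * (t (m+1) - t m))‖ :=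
        intervalIntegral.integral_nonneg zero_le_one fun x _ => norm_nonneg _
      have hchg := interp_change (p := p) (τ := τ) z habm
      have hzle : ∀ k : Fin (p+1), ‖z (t m + τ k * (t (m+1) - t m))‖
          ≤ K * ∫ x in (0:ℝ)..1,
            ‖∑ j, lagB p τ j x • z (t m + τ j * (t (m+1) - t m))‖ :=
        fun k => hKle N (fun j => z (t m + τ j * (t (m+1) - t m))) k
      calc |⟪Pz m (t m), jU m⟫_ℝ + (∫ s in t m..t (m + 1), ⟪Pz m s, R m s⟫_ℝ)|
          = |∑ k, ⟪z (t m + τ k * (t (m+1) - t m)), Rbar m k⟫_ℝ| := by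
            rw [hterm m hm]
        _ ≤ ∑ k, |⟪z (t m + τ k * (t (m+1) - t m)), Rbar m k⟫_ℝ| :=
            Finset.abs_sum_le_sum_abs _ _
        _ ≤ ∑ _k : Fin (p+1), (K * ∫ x in (0:ℝ)..1,
              ‖∑ j, lagB p τ j x • z (t m + τ j * (t (m+1) - t m))‖)
              * (maxR * (t (m+1) - t m)) := by
            apply Finset.sum_le_sum
            intro k _
            refine (abs_real_inner_le_norm _ _).trans ?_
            exact mul_le_mul (hzle k) (hRble k) (norm_nonneg _) (mul_nonneg hK0 hJ0)
        _ = ((p + 1 : ℝ) * K) * maxR * ((t (m+1) - t m) * ∫ x in (0:ℝ)..1,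
              ‖∑ j, lagB p τ j x • z (t m + τ j * (t (m+1) - t m))‖) := by
            rw [Finset.sum_const, Finset.card_univ, Fintype.card_fin, nsmul_eq_mul]
            push_cast
            ring
        _ = ((p + 1 : ℝ) * K) * maxR * ∫ s in t m..t (m + 1), ‖Pz m s‖ := by
            rw [hchg]
    -- combine
    calc |EC| ≤ ∑ m ∈ Finset.range M,
          |⟪Pz m (t m), jU m⟫_ℝ + (∫ s in t m..t (m + 1), ⟪Pz m s, R m s⟫_ℝ)| := by
          rw [hECdef]; exact Finset.abs_sum_le_sum_abs _ _
      _ ≤ ∑ m ∈ Finset.range M, ((p + 1 : ℝ) * K)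
            * ((Finset.range M).sup' (Finset.nonempty_range_iff.mpr hM.ne')
                fun m => Finset.univ.sup' Finset.univ_nonempty
                  fun k : Fin (p + 1) => ‖Rbar m k‖ / Δt m)
            * ∫ s in t m..t (m + 1), ‖Pz m s‖ :=
          Finset.sum_le_sum fun m hm => hbound m (Finset.mem_range.mp hm)
      _ = _ := by rw [← Finset.mul_sum]
end
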